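/- arXiv:2511.07642 — 12 statements merged into one kernel-verified Lean document; each statement's English description precedes it below -/
import Mathlib

section
/- Let X be a compact metric space and f : X → 2^X a set-valued map whose graph {(x,y) : y ∈ f(x)} is open in X × X. If y ∈ fⁿ(x) for some integer n ≥ 1 (where fⁿ denotes the n-fold composition of f as a relation), then there exists δ > 0 such that the open ball B_δ(y) is contained in fⁿ(x̃) for every x̃ in B_δ(x). -/
open Metric Set

/-- n-fold relational composition of a set-valued map: `fIter f 0 x = {x}`,
`fIter f (n+1) x = ⋃ y ∈ fIter f n x, f y`. -/
def fIter {X : Type*} (f : X → Set X) : ℕ → X → Set X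
  | 0, x => {x}
  | n + 1, x => ⋃ y ∈ fIter f n x, f y

theorem stmt_0 {X : Type*} [MetricSpace X] [CompactSpace X] (f : X → Set X)
    (hgraph : IsOpen {p : X × X | p.2 ∈ f p.1})
    {x y : X} {n : ℕ} (hn : 1 ≤ n) (hy : y ∈ fIter f n x) :
    ∃ δ > 0, ∀ x' ∈ ball x δ, ball y δ ⊆ fIter f n x' := by
  have key : ∀ x y : X, y ∈ f x → ∃ δ > 0, ∀ x' ∈ ball x δ, ball y δ ⊆ f x' := by
    intro x y hy
    obtain ⟨ε, hε, hsub⟩ := Metric.isOpen_iff.1 hgraph (x, y) hy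
    refine ⟨ε, hε, fun x' hx' y' hy' => hsub (show ((x', y') : X × X) ∈ ball (x, y) ε from ?_)⟩
    rw [mem_ball, Prod.dist_eq]
    exact max_lt hx' hy'
  clear hgraph
  induction n generalizing y with
  | zero => omega
  | succ m ih =>
    simp only [fIter, mem_iUnion] at hy
    obtain ⟨z, hz, hyz⟩ := hy
    rcases Nat.eq_zero_or_pos m with rfl | hm
    · simp only [fIter, mem_singleton_iff] at hz; subst hz
      obtain ⟨δ, hδ, h⟩ := key z y hyz
      refine ⟨δ, hδ, fun x' hx' y' hy' => ?_⟩
      simp only [fIter, mem_iUnion]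
      exact ⟨x', by simp [fIter], h x' hx' hy'⟩
    · obtain ⟨δ₁, hδ₁, h₁⟩ := ih hm hz
      obtain ⟨δ₂, hδ₂, h₂⟩ := key z y hyz
      refine ⟨min δ₁ δ₂, lt_min hδ₁ hδ₂, fun x' hx' y' hy' => ?_⟩
      simp only [fIter, mem_iUnion]
      refine ⟨z, h₁ x' (ball_subset_ball (min_le_left _ _) hx') (mem_ball_self hδ₁), ?_⟩
      exact h₂ z (mem_ball_self hδ₂) (ball_subset_ball (min_le_right _ _) hy')
end

section
/- Let X be a compact metric space and f : X → 2^X a set-valued map with open graph such that f(x) is nonempty for every x. Then there exists a (not necessarily continuous) function F : X → X and a constant ε₀ > 0 such that the ε₀-neighborhood of the graph of F in X × X is contained in the graph of f, i.e., for all x, z ∈ X with dist(x, z) < ε₀ and all y with dist(y, F(x)) < ε₀, one has y ∈ f(z). -/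
open Metric Set

theorem stmt_1 {X : Type*} [MetricSpace X] [CompactSpace X] (f : X → Set X)
    (hgraph : IsOpen {p : X × X | p.2 ∈ f p.1})
    (hne : ∀ x, (f x).Nonempty) :
    ∃ (F : X → X) (ε₀ : ℝ), 0 < ε₀ ∧
      ∀ x z y : X, dist x z < ε₀ → dist y (F x) < ε₀ → y ∈ f z := by
  rcases isEmpty_or_nonempty X with hX | hX
  · exact ⟨fun x => x, 1, one_pos, fun x => (hX.false x).elim⟩
  choose y hy using hne
  have key : ∀ x : X, ∃ δ > 0, ∀ z w : X, dist z x < 2*δ → dist w (y x) < 2*δ → w ∈ f z := by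
    intro x
    obtain ⟨r, hr, hball⟩ := Metric.isOpen_iff.1 hgraph (x, y x) (hy x)
    refine ⟨r/2, by linarith, fun z w hz hw => ?_⟩
    have hm : (z, w) ∈ Metric.ball (x, y x) r := by
      rw [mem_ball, Prod.dist_eq]
      simp only [max_lt_iff]
      constructor
      · calc dist (z, w).1 (x, y x).1 = dist z x := rfl
          _ < r := by linarith
      · calc dist (z, w).2 (x, y x).2 = dist w (y x) := rfl
          _ < r := by linarith
    exact hball hm
  choose δ hδ hδ' using key
  obtain ⟨s, hs⟩ := isCompact_univ.elim_finite_subcover (fun x => Metric.ball x (δ x))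
    (fun x => isOpen_ball) (by intro x _; exact mem_iUnion.2 ⟨x, mem_ball_self (hδ x)⟩)
  have hsne : s.Nonempty := by
    obtain ⟨x⟩ := hX
    obtain ⟨i, hi, _⟩ := mem_iUnion₂.1 (hs (mem_univ x))
    exact ⟨i, hi⟩
  set ε₀ := s.inf' hsne δ with hε
  have hε₀ : 0 < ε₀ := (Finset.lt_inf'_iff hsne).2 (fun i _ => hδ i)
  have hpick : ∀ x : X, ∃ i ∈ s, x ∈ Metric.ball i (δ i) := fun x => by
    simpa using mem_iUnion₂.1 (hs (mem_univ x))
  choose ix hix hix' using hpick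
  refine ⟨fun x => y (ix x), ε₀, hε₀, fun x z w hxz hw => ?_⟩
  have h1 : dist x (ix x) < δ (ix x) := hix' x
  have h2 : ε₀ ≤ δ (ix x) := Finset.inf'_le _ (hix x)
  apply hδ' (ix x)
  · calc dist z (ix x) ≤ dist z x + dist x (ix x) := dist_triangle _ _ _
      _ < ε₀ + δ (ix x) := by rw [dist_comm] at hxz; linarith
      _ ≤ 2 * δ (ix x) := by linarith
  · calc dist w (y (ix x)) < ε₀ := hw
      _ ≤ 2 * δ (ix x) := by linarith [hδ (ix x)]
end

section
/- Let X be a connected metric space and f : X → 2^X a set-valued map with open graph such that f(x) is nonempty, open, and connected for every x ∈ X. Then the image f(X) = ⋃_{x ∈ X} f(x) is a connected subset of X. -/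
open Metric Set

theorem stmt_2 {X : Type*} [MetricSpace X] [ConnectedSpace X] (f : X → Set X)
    (hgraph : IsOpen {p : X × X | p.2 ∈ f p.1})
    (hval : ∀ x, IsOpen (f x) ∧ IsConnected (f x)) :
    IsConnected (⋃ x : X, f x) := by
  obtain ⟨x₀⟩ := ‹ConnectedSpace X›.toNonempty
  obtain ⟨y₀, hy₀⟩ := (hval x₀).2.nonempty
  refine ⟨⟨y₀, mem_iUnion.2 ⟨x₀, hy₀⟩⟩, ?_⟩
  intro u v hu hv hsub ⟨a, ha, hau⟩ ⟨b, hb, hbv⟩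
  -- A = points x such that f x meets u; B similarly with v
  set A : Set X := Prod.fst '' ({p : X × X | p.2 ∈ f p.1} ∩ (Prod.snd ⁻¹' u)) with hA
  set B : Set X := Prod.fst '' ({p : X × X | p.2 ∈ f p.1} ∩ (Prod.snd ⁻¹' v)) with hB
  have hAopen : IsOpen A := isOpenMap_fst _ (hgraph.inter (hu.preimage continuous_snd))
  have hBopen : IsOpen B := isOpenMap_fst _ (hgraph.inter (hv.preimage continuous_snd))
  have hAB : A ∪ B = univ := by
    ext x
    simp only [mem_union, mem_univ, iff_true, hA, hB, mem_image, mem_inter_iff,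
      mem_setOf_eq, mem_preimage]
    obtain ⟨y, hy⟩ := (hval x).2.nonempty
    rcases hsub (mem_iUnion.2 ⟨x, hy⟩) with h | h
    · exact Or.inl ⟨(x, y), ⟨hy, h⟩, rfl⟩
    · exact Or.inr ⟨(x, y), ⟨hy, h⟩, rfl⟩
  have hAne : A.Nonempty := by
    obtain ⟨x, hx⟩ := mem_iUnion.1 ha
    exact ⟨x, ⟨(x, a), ⟨hx, hau⟩, rfl⟩⟩
  have hBne : B.Nonempty := by
    obtain ⟨x, hx⟩ := mem_iUnion.1 hb
    exact ⟨x, ⟨(x, b), ⟨hx, hbv⟩, rfl⟩⟩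
  have hXconn : IsPreconnected (univ : Set X) := isPreconnected_univ
  obtain ⟨x, -, hxA, hxB⟩ := hXconn A B hAopen hBopen (hAB ▸ le_rfl)
    (hAne.imp fun z hz => ⟨mem_univ z, hz⟩) (hBne.imp fun z hz => ⟨mem_univ z, hz⟩)
  obtain ⟨⟨x1, y1⟩, ⟨hy1, hy1u⟩, rfl⟩ := hxA
  obtain ⟨⟨x2, y2⟩, ⟨hy2, hy2v⟩, hx2⟩ := hxB
  subst hx2
  -- f x2 meets both u and v, and is preconnected
  have := (hval x2).2.isPreconnected u v hu hv
    (fun z hz => hsub (mem_iUnion.2 ⟨x2, hz⟩)) ⟨y1, hy1, hy1u⟩ ⟨y2, hy2, hy2v⟩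
  obtain ⟨y, hyf, hyu, hyv⟩ := this
  exact ⟨y, mem_iUnion.2 ⟨x2, hyf⟩, hyu, hyv⟩
end

section
/- Let X be a compact metric space and f : X → 2^X an open set-valued map. Write x ⇝ y if there exist n ≥ 1 and a finite sequence x = x₀, x₁, …, xₙ = y with x_{k+1} ∈ f(x_k). Define Ω(f) = {x : x ⇝ x} and, for x ∈ Ω(f), the class [x]_Ω = {y ∈ Ω(f) : x ⇝ y and y ⇝ x}. Then [x]_Ω is an open subset of X, and consequently Ω(f) is open. -/
open Metric Set

/-- Image of a set under the n-fold composition. -/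
def fIterS {X : Type*} (f : X → Set X) (n : ℕ) (A : Set X) : Set X :=
  ⋃ a ∈ A, fIter f n a

/-- `x ⇝ y`: there is a finite trajectory of length ≥ 1 from `x` to `y`. -/
def Reach {X : Type*} (f : X → Set X) (x y : X) : Prop :=
  ∃ n, 1 ≤ n ∧ y ∈ fIter f n x

/-- The recurrent set `Ω(f)`. -/
def Omega {X : Type*} (f : X → Set X) : Set X := {x | Reach f x x}

/-- The final recurrent set `Ω_final(f)`. -/
def OmegaFinal {X : Type*} (f : X → Set X) : Set X :=
  {x | ∀ y, Reach f x y → Reach f y x}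

/-- `f` is an open set-valued map: open graph and nonempty open connected values. -/
def IsOpenSVM {X : Type*} [TopologicalSpace X] (f : X → Set X) : Prop :=
  IsOpen {p : X × X | p.2 ∈ f p.1} ∧ ∀ x, IsOpen (f x) ∧ IsConnected (f x)

/-- `f` is transitive. -/
def SVMTransitive {X : Type*} [TopologicalSpace X] (f : X → Set X) : Prop :=
  ∀ A B : Set X, IsOpen A → A.Nonempty → IsOpen B → B.Nonempty →
    ∃ n, 1 ≤ n ∧ (fIterS f n A ∩ B).Nonempty


lemma fIter_add {X : Type*} (f : X → Set X) {m n : ℕ} {x y z : X}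
    (hy : y ∈ fIter f m x) (hz : z ∈ fIter f n y) : z ∈ fIter f (m + n) x := by
  induction n generalizing z with
  | zero => simp [fIter] at hz; subst hz; exact hy
  | succ n ih =>
    simp only [fIter, mem_iUnion] at hz ⊢
    obtain ⟨w, hw, hzw⟩ := hz
    exact ⟨w, ih hw, hzw⟩

lemma fIter_succ_left {X : Type*} (f : X → Set X) (n : ℕ) (x : X) :
    fIter f (n + 1) x = ⋃ z ∈ f x, fIter f n z := by
  induction n with
  | zero => simp [fIter]
  | succ n ih =>
    show (⋃ y ∈ fIter f (n+1) x, f y) = _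
    rw [ih]
    ext w
    simp only [mem_iUnion, fIter]
    constructor
    · rintro ⟨y, ⟨z, hz, hy⟩, hw⟩; exact ⟨z, hz, y, hy, hw⟩
    · rintro ⟨z, hz, y, hy, hw⟩; exact ⟨y, ⟨z, hz, hy⟩, hw⟩

lemma isOpen_reach_target {X : Type*} [TopologicalSpace X] {f : X → Set X}
    (hf : IsOpenSVM f) (x : X) : IsOpen {y | Reach f x y} := by
  have h1 : ∀ n x, IsOpen (fIter f (n + 1) x) := by
    intro n x
    exact isOpen_biUnion fun y _ => (hf.2 y).1
  have : {y | Reach f x y} = ⋃ n, fIter f (n + 1) x := by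
    ext y
    simp only [mem_setOf_eq, Reach, mem_iUnion]
    constructor
    · rintro ⟨n, hn, hy⟩
      obtain ⟨m, rfl⟩ := Nat.exists_eq_add_of_le hn
      exact ⟨m, by rwa [Nat.add_comm] at hy⟩
    · rintro ⟨n, hy⟩; exact ⟨n + 1, Nat.le_add_left _ _, hy⟩
  rw [this]
  exact isOpen_iUnion fun n => h1 n x

lemma isOpen_reach_source {X : Type*} [TopologicalSpace X] {f : X → Set X}
    (hf : IsOpenSVM f) (y : X) : IsOpen {x | Reach f x y} := by
  have h1 : ∀ n, IsOpen {x | y ∈ fIter f (n + 1) x} := by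
    intro n
    have : {x | y ∈ fIter f (n + 1) x} = ⋃ z ∈ {z | y ∈ fIter f n z}, {x | z ∈ f x} := by
      ext x
      simp only [mem_setOf_eq, fIter_succ_left, mem_iUnion]
      exact ⟨fun ⟨z, hz, hy⟩ => ⟨z, hy, hz⟩, fun ⟨z, hy, hz⟩ => ⟨z, hz, hy⟩⟩
    rw [this]
    refine isOpen_biUnion fun z _ => ?_
    have := hf.1.preimage (continuous_id.prodMk (continuous_const : Continuous fun _ : X => z))
    exact this
  have : {x | Reach f x y} = ⋃ n, {x | y ∈ fIter f (n + 1) x} := by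
    ext x
    simp only [mem_setOf_eq, Reach, mem_iUnion]
    constructor
    · rintro ⟨n, hn, hy⟩
      obtain ⟨m, rfl⟩ := Nat.exists_eq_add_of_le hn
      exact ⟨m, by rwa [Nat.add_comm] at hy⟩
    · rintro ⟨n, hy⟩; exact ⟨n + 1, Nat.le_add_left _ _, hy⟩
  rw [this]
  exact isOpen_iUnion h1

lemma reach_trans {X : Type*} {f : X → Set X} {x y z : X}
    (h1 : Reach f x y) (h2 : Reach f y z) : Reach f x z := by
  obtain ⟨m, hm, hy⟩ := h1
  obtain ⟨n, hn, hz⟩ := h2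
  exact ⟨m + n, le_trans hm (Nat.le_add_right _ _), fIter_add f hy hz⟩

theorem stmt_3 {X : Type*} [MetricSpace X] [CompactSpace X] (f : X → Set X)
    (hf : IsOpenSVM f) {x : X} (hx : x ∈ Omega f) :
    IsOpen {y | y ∈ Omega f ∧ Reach f x y ∧ Reach f y x} ∧ IsOpen (Omega f) := by
  have key : ∀ a : X, IsOpen ({y | Reach f a y} ∩ {y | Reach f y a}) :=
    fun a => (isOpen_reach_target hf a).inter (isOpen_reach_source hf a)
  constructor
  · have : {y | y ∈ Omega f ∧ Reach f x y ∧ Reach f y x}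
        = {y | Reach f x y} ∩ {y | Reach f y x} := by
      ext y
      simp only [mem_setOf_eq, mem_inter_iff]
      exact ⟨fun h => h.2, fun h => ⟨reach_trans h.2 h.1, h⟩⟩
    rw [this]; exact key x
  · have : Omega f = ⋃ a : X, {y | Reach f a y} ∩ {y | Reach f y a} := by
      ext y
      simp only [Omega, mem_setOf_eq, mem_iUnion, mem_inter_iff]
      exact ⟨fun h => ⟨y, h, h⟩, fun ⟨a, h1, h2⟩ => reach_trans h2 h1⟩
    rw [this]; exact isOpen_iUnion key
end

section
/- Let X be a compact metric space and f : X → 2^X an open set-valued map (open graph, nonempty open values). Then the recurrent set Ω(f) = {x : x ⇝ x} is nonempty. -/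
open Metric Set

lemma fIter_succ_of_mem {X : Type*} {f : X → Set X} {k : ℕ} {x z w : X}
    (hz : z ∈ fIter f k x) (hw : w ∈ f z) : w ∈ fIter f (k + 1) x := by
  simp only [fIter, mem_iUnion]
  exact ⟨z, hz, hw⟩

lemma iterate_mem_fIter {X : Type*} {f : X → Set X} {g : X → X}
    (hg : ∀ x, g x ∈ f x) : ∀ (k : ℕ) (x : X), g^[k] x ∈ fIter f k x := by
  intro k
  induction k with
  | zero => intro x; simp [fIter]
  | succ k ih =>
    intro x
    rw [Function.iterate_succ_apply']
    exact fIter_succ_of_mem (ih x) (hg _)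

lemma uniform_ball {X : Type*} [MetricSpace X] [CompactSpace X] [Nonempty X]
    (f : X → Set X) (hG : IsOpen {p : X × X | p.2 ∈ f p.1})
    (hne : ∀ x, (f x).Nonempty) :
    ∃ ε > 0, ∀ x : X, ∃ y, Metric.ball y ε ⊆ f x := by
  choose y hy using hne
  have hmem : ∀ x : X, (x, y x) ∈ {p : X × X | p.2 ∈ f p.1} := fun x => hy x
  choose ε hε hball using fun x => Metric.isOpen_iff.1 hG (x, y x) (hmem x)
  have hcover : (univ : Set X) ⊆ ⋃ x : X, Metric.ball x (ε x / 2) := by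
    intro x _
    exact mem_iUnion.2 ⟨x, by simp [hε x, half_pos]⟩
  obtain ⟨t, ht⟩ := isCompact_univ.elim_finite_subcover
    (fun x : X => Metric.ball x (ε x / 2)) (fun x => isOpen_ball) hcover
  have htne : t.Nonempty := by
    rcases (inferInstance : Nonempty X) with ⟨x⟩
    have := ht (mem_univ x)
    simp only [mem_iUnion] at this
    obtain ⟨c, hc, -⟩ := this
    exact ⟨c, hc⟩
  refine ⟨t.inf' htne (fun c => ε c / 2), ?_, ?_⟩
  · rw [gt_iff_lt, Finset.lt_inf'_iff]
    exact fun c _ => half_pos (hε c)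
  · intro x
    have := ht (mem_univ x)
    simp only [mem_iUnion] at this
    obtain ⟨c, hc, hxc⟩ := this
    refine ⟨y c, fun z hz => ?_⟩
    have hδ : t.inf' htne (fun c => ε c / 2) ≤ ε c / 2 := Finset.inf'_le _ hc
    have h1 : dist z (y c) < ε c :=
      lt_of_lt_of_le (lt_of_lt_of_le (mem_ball.1 hz) hδ) (by have := hε c; linarith)
    have h2 : dist x c < ε c := lt_of_lt_of_le (mem_ball.1 hxc) (by have := hε c; linarith)
    have : (x, z) ∈ Metric.ball (c, y c) (ε c) := by
      rw [Metric.mem_ball, Prod.dist_eq]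
      exact max_lt h2 h1
    exact hball c this

theorem stmt_5 {X : Type*} [MetricSpace X] [CompactSpace X] [Nonempty X]
    (f : X → Set X) (hf : IsOpenSVM f) :
    (Omega f).Nonempty := by
  obtain ⟨ε, hε, hstep⟩ := uniform_ball f hf.1 (fun x => (hf.2 x).2.nonempty)
  choose g hg using hstep
  have hgf : ∀ x, g x ∈ f x := fun x => hg x (mem_ball_self hε)
  rcases (inferInstance : Nonempty X) with ⟨x₀⟩
  set u : ℕ → X := fun n => g^[n] x₀ with hu
  obtain ⟨a, -, φ, hφ, hconv⟩ := isCompact_univ.tendsto_subseq (fun n => mem_univ (u n))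
  rw [Metric.tendsto_atTop] at hconv
  obtain ⟨N, hN⟩ := hconv (ε / 2) (half_pos hε)
  set m := φ N with hm
  set n := φ (N + 1) with hn
  have hmn : m < n := hφ (Nat.lt_succ_self N)
  have hdist : dist (u m) (u n) < ε := by
    calc dist (u m) (u n) ≤ dist (u m) a + dist (u n) a := dist_triangle_right _ _ _
    _ < ε / 2 + ε / 2 := add_lt_add (hN N le_rfl) (hN (N + 1) (Nat.le_succ N))
    _ = ε := add_halves ε
  have hn1 : n = (n - 1) + 1 := (Nat.succ_pred_eq_of_pos (by omega)).symm
  have hfn : u m ∈ f (u (n - 1)) := by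
    have : u n = g (u (n - 1)) := by
      rw [hu]; simp only
      conv_lhs => rw [hn1]
      rw [Function.iterate_succ_apply']
    apply hg (u (n - 1))
    rw [← this]
    exact mem_ball.2 hdist
  have htraj : u (n - 1) ∈ fIter f (n - 1 - m) (u m) := by
    have : g^[n - 1 - m] (u m) = u (n - 1) := by
      rw [hu]; simp only [← Function.iterate_add_apply]
      congr 1
      omega
    rw [← this]
    exact iterate_mem_fIter hgf _ _
  refine ⟨u m, (n - 1 - m) + 1, by omega, fIter_succ_of_mem htraj hfn⟩
end

section
/- Let X be a compact metric space and f : X → 2^X a transitive open set-valued map. Then f(X) ⊆ Ω(f); that is, every point in the image of f is recurrent (y ⇝ y). -/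
open Metric Set

lemma fIter_one' {X : Type*} (f : X → Set X) (x : X) : fIter f 1 x = f x := by
  simp [fIter]

lemma fIter_comp {X : Type*} (f : X → Set X) :
    ∀ n m x y z, y ∈ fIter f m x → z ∈ fIter f n y → z ∈ fIter f (m + n) x := by
  intro n
  induction n with
  | zero =>
    intro m x y z hy hz
    have hzy : z = y := hz
    rw [Nat.add_zero]; rw [hzy]; exact hy
  | succ n ih =>
    intro m x y z hy hz
    obtain ⟨c, hc, hzc⟩ := mem_iUnion₂.mp hz
    show z ∈ fIter f ((m + n) + 1) x
    exact mem_iUnion₂.mpr ⟨c, ih m x y c hy hc, hzc⟩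

lemma fIter_graph_open {X : Type*} [TopologicalSpace X] (f : X → Set X)
    (hf : IsOpen {p : X × X | p.2 ∈ f p.1}) :
    ∀ n, IsOpen {p : X × X | p.2 ∈ fIter f (n + 1) p.1} := by
  intro n
  induction n with
  | zero =>
    have : {p : X × X | p.2 ∈ fIter f 1 p.1} = {p : X × X | p.2 ∈ f p.1} := by
      ext p; simp [fIter]
    rw [this]; exact hf
  | succ n ih =>
    rw [isOpen_prod_iff] at ih hf ⊢
    intro a b hab
    obtain ⟨c, hc, hbc⟩ := mem_iUnion₂.mp (show b ∈ ⋃ y ∈ fIter f (n + 1) a, f y from hab)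
    obtain ⟨u, v, hu, hv, hau, hcv, huv⟩ := ih a c hc
    obtain ⟨u', v', hu', hv', hcu', hbv', huv'⟩ := hf c b hbc
    refine ⟨u, v', hu, hv', hau, hbv', ?_⟩
    rintro ⟨a', b'⟩ ⟨ha', hb'⟩
    show b' ∈ fIter f (n + 1 + 1) a'
    exact mem_iUnion₂.mpr ⟨c, huv (show (a', c) ∈ u ×ˢ v from ⟨ha', hcv⟩),
      huv' (show (c, b') ∈ u' ×ˢ v' from ⟨hcu', hb'⟩)⟩

lemma fIter_open {X : Type*} [TopologicalSpace X] (f : X → Set X)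
    (hf : ∀ x, IsOpen (f x)) (n : ℕ) (x : X) : IsOpen (fIter f (n + 1) x) := by
  show IsOpen (⋃ y ∈ fIter f n x, f y)
  exact isOpen_biUnion fun y _ => hf y

theorem stmt_7 {X : Type*} [MetricSpace X] [CompactSpace X] (f : X → Set X)
    (hf : IsOpenSVM f) (htrans : SVMTransitive f) :
    (⋃ x : X, f x) ⊆ Omega f := by
  intro y hy
  obtain ⟨x, hx⟩ := mem_iUnion.mp hy
  -- forward reachable set from y
  set V : Set X := ⋃ n, fIter f (n + 1) y with hV
  have hVopen : IsOpen V := isOpen_iUnion fun n => fIter_open f (fun z => (hf.2 z).1) n y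
  have hVne : V.Nonempty := by
    obtain ⟨w, hw⟩ := (hf.2 y).2.nonempty
    exact ⟨w, mem_iUnion.mpr ⟨0, by simpa [fIter_one'] using hw⟩⟩
  -- backward reachable set to y
  set U : Set X := ⋃ n, {z | y ∈ fIter f (n + 1) z} with hU
  have hUopen : IsOpen U := by
    refine isOpen_iUnion fun n => ?_
    have := fIter_graph_open f hf.1 n
    have hc : Continuous fun z : X => ((z, y) : X × X) := by continuity
    exact this.preimage hc
  have hUne : U.Nonempty :=
    ⟨x, mem_iUnion.mpr ⟨0, by simpa [fIter_one'] using hx⟩⟩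
  obtain ⟨n, hn1, u, hu⟩ := htrans V U hVopen hVne hUopen hUne
  obtain ⟨huV, huU⟩ := hu
  simp only [fIterS, mem_iUnion] at huV
  obtain ⟨v, hvV, huv⟩ := huV
  obtain ⟨k, hvk⟩ := mem_iUnion.mp hvV
  obtain ⟨m, hum⟩ := mem_iUnion.mp huU
  have h1 : u ∈ fIter f ((k + 1) + n) y := fIter_comp f n (k + 1) y v u hvk huv
  have h2 : y ∈ fIter f (((k + 1) + n) + (m + 1)) y :=
    fIter_comp f (m + 1) ((k + 1) + n) y u y h1 hum
  exact ⟨((k + 1) + n) + (m + 1), by omega, h2⟩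
end

section
/- Let X be a compact metric space and f : X → 2^X a transitive open set-valued map. Then for every x ∈ X, f(X) = ⋃_{n ≥ 1} fⁿ(x); that is, the image of f equals the set of points reachable from any single point. -/
open Metric Set

lemma fIter_step_subset {X : Type*} (f : X → Set X) (m : ℕ) (x a : X) (ha : a ∈ f x) :
    fIter f m a ⊆ fIter f (m + 1) x := by
  induction m with
  | zero =>
    intro z hz
    simp only [fIter] at hz ⊢
    rcases hz with rfl
    exact mem_biUnion rfl ha
  | succ m ih =>
    intro z hz
    have hz' : z ∈ ⋃ y ∈ fIter f m a, f y := hz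
    simp only [mem_iUnion] at hz'
    obtain ⟨y, hy, hzy⟩ := hz'
    show z ∈ ⋃ y ∈ fIter f (m + 1) x, f y
    exact mem_biUnion (ih hy) hzy

lemma f_subset_fIter {X : Type*} (f : X → Set X) (n : ℕ) (x z : X) (hz : z ∈ fIter f n x) :
    f z ⊆ fIter f (n + 1) x := by
  intro w hw
  simp only [fIter, mem_iUnion]
  exact ⟨z, hz, hw⟩

theorem stmt_10 {X : Type*} [MetricSpace X] [CompactSpace X] (f : X → Set X)
    (hf : IsOpenSVM f) (htrans : SVMTransitive f) (x : X) :
    (⋃ x' : X, f x') = ⋃ n ≥ 1, fIter f n x := by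
  ext y
  simp only [mem_iUnion, exists_prop]
  constructor
  · rintro ⟨x', hy⟩
    -- open graph: get open U ∋ x' with y ∈ f u for all u ∈ U
    have hgr : (x', y) ∈ {p : X × X | p.2 ∈ f p.1} := hy
    obtain ⟨U, V, hU, hV, hxU, hyV, hUV⟩ :=
      isOpen_prod_iff.mp hf.1 x' y hgr
    -- transitivity from f x to U
    obtain ⟨n, hn, u, huI, huU⟩ :=
      htrans (f x) U (hf.2 x).1 (hf.2 x).2.nonempty hU ⟨x', hxU⟩
    -- u ∈ fIter f (n+1) x
    have hu1 : u ∈ fIter f (n + 1) x := by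
      simp only [fIterS, mem_iUnion] at huI
      obtain ⟨a, ha, hua⟩ := huI
      exact fIter_step_subset f n x a ha hua
    have hyU : y ∈ f u := hUV (mk_mem_prod huU hyV)
    exact ⟨n + 2, by omega, f_subset_fIter f (n + 1) x u hu1 hyU⟩
  · rintro ⟨n, hn, hy⟩
    obtain ⟨m, rfl⟩ : ∃ m, n = m + 1 := ⟨n - 1, by omega⟩
    simp only [fIter, mem_iUnion] at hy
    obtain ⟨z, _, hz⟩ := hy
    exact ⟨z, hz⟩
end

section
/- Let X be a compact metric space, f : X → 2^X a transitive open set-valued map, and U ⊆ X an open set whose closure satisfies cl(U) ⊆ f(X). Then there exists n ≥ 1 such that U ⊆ fⁿ(U). -/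
open Metric Set

lemma fIter_trans {X : Type*} (f : X → Set X) {x y z : X} {n m : ℕ}
    (hy : y ∈ fIter f n x) (hz : z ∈ fIter f m y) : z ∈ fIter f (n + m) x := by
  induction m generalizing z with
  | zero =>
    simp only [fIter, Set.mem_singleton_iff] at hz
    subst hz; exact hy
  | succ m ih =>
    simp only [fIter, Set.mem_iUnion] at hz ⊢
    obtain ⟨w, hw, hzw⟩ := hz
    exact ⟨w, ih hw, hzw⟩

lemma fIterS_mono {X : Type*} (f : X → Set X) {n : ℕ} {A B : Set X} (h : A ⊆ B) :
    fIterS f n A ⊆ fIterS f n B := by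
  intro z hz
  simp only [fIterS, Set.mem_iUnion] at hz ⊢
  obtain ⟨a, ha, hza⟩ := hz
  exact ⟨a, h ha, hza⟩

theorem stmt_11 {X : Type*} [MetricSpace X] [CompactSpace X] (f : X → Set X)
    (hf : IsOpenSVM f) (htrans : SVMTransitive f)
    (U : Set X) (hU : IsOpen U) (hcl : closure U ⊆ ⋃ x : X, f x) :
    ∃ n, 1 ≤ n ∧ U ⊆ fIterS f n U := by
  classical
  have hgraph := hf.1
  rw [isOpen_prod_iff] at hgraph
  -- windows around each point of the closure of U
  have key : ∀ u : closure U, ∃ (V W : Set X),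
      IsOpen V ∧ IsOpen W ∧ V.Nonempty ∧ (u : X) ∈ W ∧ ∀ v ∈ V, W ⊆ f v := by
    rintro ⟨u, hu⟩
    obtain ⟨x, hx⟩ := Set.mem_iUnion.1 (hcl hu)
    obtain ⟨V, W, hVo, hWo, hxV, huW, hsub⟩ := hgraph x u hx
    exact ⟨V, W, hVo, hWo, ⟨x, hxV⟩, huW,
      fun v hv w hw => hsub (Set.mk_mem_prod hv hw)⟩
  choose V W hVo hWo hVne huW hVW using key
  -- each window meets U
  have hWU : ∀ u : closure U, (W u ∩ U).Nonempty := by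
    intro u
    have := (mem_closure_iff_nhds.1 u.2) (W u) ((hWo u).mem_nhds (huW u))
    exact this
  -- for each window, an exponent b ≥ 1 with W u ⊆ f^(s*b) (W u ∩ U) for all s ≥ 1
  have hb : ∀ u : closure U, ∃ b : ℕ, 1 ≤ b ∧
      ∀ s : ℕ, W u ⊆ fIterS f ((s + 1) * b) (W u ∩ U) := by
    intro u
    obtain ⟨n, hn1, v, hvIter, hvV⟩ := htrans (W u ∩ U) (V u)
      ((hWo u).inter hU) (hWU u) (hVo u) (hVne u)
    -- v ∈ fIterS f n (W u ∩ U), W u ⊆ f v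
    obtain ⟨p, hp, hvp⟩ : ∃ p ∈ W u ∩ U, v ∈ fIter f n p := by
      simpa only [fIterS, Set.mem_iUnion, exists_prop] using hvIter
    have base : W u ⊆ fIterS f (n + 1) (W u ∩ U) := by
      intro w hw
      have hw1 : w ∈ fIter f 1 v := by
        simp only [fIter, Set.mem_iUnion]
        exact ⟨v, rfl, hVW u v hvV hw⟩
      simp only [fIterS, Set.mem_iUnion]
      exact ⟨p, hp, fIter_trans f hvp hw1⟩
    refine ⟨n + 1, by omega, ?_⟩
    intro s
    induction s with
    | zero => simpa using base
    | succ s ih =>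
      intro w hw
      obtain ⟨p', hp', hwp'⟩ : ∃ p' ∈ W u ∩ U, w ∈ fIter f (n + 1) p' := by
        simpa only [fIterS, Set.mem_iUnion, exists_prop] using base hw
      obtain ⟨q, hq, hp'q⟩ : ∃ q ∈ W u ∩ U, p' ∈ fIter f ((s + 1) * (n + 1)) q := by
        simpa only [fIterS, Set.mem_iUnion, exists_prop] using ih hp'.1
      have : w ∈ fIter f ((s + 1) * (n + 1) + (n + 1)) q := fIter_trans f hp'q hwp'
      simp only [fIterS, Set.mem_iUnion]
      refine ⟨q, hq, ?_⟩
      have harith : (s + 1 + 1) * (n + 1) = (s + 1) * (n + 1) + (n + 1) := by ring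
      rw [harith]
      exact this
  choose b hb1 hbiter using hb
  -- compactness: finitely many windows cover the closure of U
  have hcover : closure U ⊆ ⋃ u : closure U, W u := by
    intro x hx
    exact Set.mem_iUnion.2 ⟨⟨x, hx⟩, huW ⟨x, hx⟩⟩
  obtain ⟨t, ht⟩ := (isClosed_closure.isCompact).elim_finite_subcover
    (fun u : closure U => W u) hWo hcover
  -- the common exponent
  set N : ℕ := ∏ u ∈ t, b u with hN
  have hN1 : 1 ≤ N := Finset.one_le_prod' (fun u _ => hb1 u)
  refine ⟨N, hN1, ?_⟩
  intro x hxU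
  obtain ⟨u, hut, hxW⟩ : ∃ u ∈ t, x ∈ W u := by
    have := ht (subset_closure hxU)
    simpa only [Set.mem_iUnion, exists_prop] using this
  -- N = (∏ over t.erase u) * b u, a positive multiple of b u
  have hmul : N = (∏ v ∈ t.erase u, b v) * b u := (Finset.prod_erase_mul t b hut).symm
  set s : ℕ := ∏ v ∈ t.erase u, b v with hs
  have hs1 : 1 ≤ s := Finset.one_le_prod' (fun v _ => hb1 v)
  have hx' : x ∈ fIterS f (s * b u) (W u ∩ U) := by
    have := hbiter u (s - 1) hxW
    rwa [Nat.sub_add_cancel hs1] at this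
  rw [hmul]
  exact fIterS_mono f (Set.inter_subset_right) hx'
end

section
/- Let X be a compact metric space, f : X → 2^X an open set-valued map, and C ⊆ X a nonempty connected open set with f(C) ⊆ C. If x ∈ ∂C (the boundary of C), then f(x) ⊆ C. -/
open Metric Set

theorem stmt_14 {X : Type*} [MetricSpace X] [CompactSpace X] (f : X → Set X)
    (hf : IsOpenSVM f) (C : Set X) (hCne : C.Nonempty) (hCconn : IsConnected C)
    (hCopen : IsOpen C) (hinv : (⋃ c ∈ C, f c) ⊆ C)
    {x : X} (hx : x ∈ frontier C) :
    f x ⊆ C := by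
  intro y hy
  obtain ⟨u, v, hu, hv, hxu, hyv, huv⟩ := isOpen_prod_iff.mp hf.1 x y hy
  have hxc : x ∈ closure C := hx.1
  obtain ⟨c, hcu, hcC⟩ := mem_closure_iff.mp hxc u hu hxu
  exact hinv (mem_biUnion hcC (huv (Set.mk_mem_prod hcu hyv)))
end

section
/- Let M be a compact metric space without isolated points. Then for every ε > 0 there exists r > 0 such that for every x₀ ∈ M the annulus {x ∈ M : r < dist(x, x₀) < ε} is nonempty. -/
open Metric Set Filter

theorem stmt_17 {M : Type*} [MetricSpace M] [CompactSpace M]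
    (hiso : ∀ x : M, (nhdsWithin x {x}ᶜ).NeBot) :
    ∀ ε : ℝ, 0 < ε → ∃ r > 0, ∀ x₀ : M,
      ∃ x : M, r < dist x x₀ ∧ dist x x₀ < ε := by
  intro ε hε
  by_contra h
  push_neg at h
  -- for each n, pick a bad center
  choose u hu using fun n : ℕ => h (1 / (n + 1)) (by positivity)
  obtain ⟨x₀, -, φ, hφ, hlim⟩ := IsCompact.tendsto_subseq (x := u)
    (isCompact_univ) (fun n => mem_univ _)
  -- find y ≠ x₀ with dist y x₀ < ε
  have hball : ball x₀ ε ∈ nhdsWithin x₀ {x₀}ᶜ :=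
    nhdsWithin_le_nhds (ball_mem_nhds _ hε)
  obtain ⟨y, hy⟩ := (hiso x₀).nonempty_of_mem (inter_mem hball self_mem_nhdsWithin)
  obtain ⟨hyball, hyne⟩ := hy
  have hd : 0 < dist y x₀ := dist_pos.mpr hyne
  have hdε : dist y x₀ < ε := mem_ball.mp hyball
  set d := dist y x₀
  -- eventually the subsequence is close to x₀
  have h1 : ∀ᶠ n in atTop, dist ((u ∘ φ) n) x₀ < min (d / 2) (ε - d) :=
    (tendsto_iff_dist_tendsto_zero.mp hlim).eventually_lt_const
      (by simp [lt_min_iff]; constructor <;> linarith)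
  have h2 : Tendsto (fun n : ℕ => 1 / ((φ n : ℝ) + 1)) atTop (nhds 0) := by
    exact tendsto_one_div_add_atTop_nhds_zero_nat.comp hφ.tendsto_atTop
  have h3 : ∀ᶠ n in atTop, 1 / ((φ n : ℝ) + 1) < d / 2 :=
    h2.eventually_lt_const (by linarith)
  obtain ⟨n, hn1, hn3⟩ := (h1.and h3).exists
  have hb := hu (φ n) y
  simp only [Function.comp_apply] at hn1
  rw [lt_min_iff] at hn1
  have hy1 : dist y (u (φ n)) ≤ d + dist (u (φ n)) x₀ := dist_triangle_right _ _ _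
  have hy2 : d ≤ dist y (u (φ n)) + dist (u (φ n)) x₀ := dist_triangle _ _ _
  have : 1 / ((φ n : ℝ) + 1) < dist y (u (φ n)) := by linarith [hn1.1, hn1.2]
  have : dist y (u (φ n)) < ε := by linarith [hn1.2]
  exact absurd (hb ‹_›) (not_le.mpr ‹_›)
end

section
/- Let X be a compact connected metric space without isolated points and f : X → 2^X an open set-valued map. Then for every m ∈ ℕ there exists ε₀ > 0 such that for every x ∈ X one can find points x₁, …, x_m ∈ f(x) with dist(x_i, x_j) > ε₀ for all 1 ≤ i < j ≤ m. -/
open Metric Set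

theorem stmt_18 {X : Type*} [MetricSpace X] [CompactSpace X] [ConnectedSpace X]
    (hiso : ∀ x : X, (nhdsWithin x {x}ᶜ).NeBot)
    (f : X → Set X)
    (hgraph : IsOpen {p : X × X | p.2 ∈ f p.1})
    (hval : ∀ x, IsOpen (f x) ∧ IsConnected (f x)) (m : ℕ) :
    ∃ ε₀ > 0, ∀ x : X, ∃ g : Fin m → X,
      (∀ i, g i ∈ f x) ∧ ∀ i j, i ≠ j → ε₀ < dist (g i) (g j) := by
  haveI : ∀ x : X, (nhdsWithin x {x}ᶜ).NeBot := hiso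
  -- For each x, find m points in f x, pairwise separated, and a neighborhood where it works
  have key : ∀ x : X, ∃ ε > 0, ∃ U : Set X, IsOpen U ∧ x ∈ U ∧ ∃ g : Fin m → X,
      (∀ x' ∈ U, ∀ i, g i ∈ f x') ∧ ∀ i j, i ≠ j → ε < dist (g i) (g j) := by
    intro x
    obtain ⟨hopen, hconn⟩ := hval x
    -- f x is infinite
    obtain ⟨y, hy⟩ := hconn.nonempty
    have hinf : (f x).Infinite := infinite_of_mem_nhds y (hopen.mem_nhds hy)
    obtain ⟨e⟩ : Nonempty (ℕ ↪ f x) := ⟨hinf.natEmbedding _⟩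
    set g : Fin m → X := fun i => (e i : X) with hg
    have hginj : Function.Injective g := by
      intro i j hij
      exact Fin.ext (Nat.cast_injective (e.injective (Subtype.ext hij)))
    have hgmem : ∀ i, g i ∈ f x := fun i => (e i).2
    -- positive separation
    have hsep : ∃ ε > 0, ∀ i j : Fin m, i ≠ j → ε < dist (g i) (g j) := by
      set s := (Finset.univ.filter fun p : Fin m × Fin m => p.1 ≠ p.2) with hs
      rcases s.eq_empty_or_nonempty with he | hne
      · refine ⟨1, one_pos, fun i j hij => absurd ?_ (Finset.eq_empty_iff_forall_notMem.mp he (i, j))⟩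
        simp [hs, hij]
      · set δ := s.inf' hne (fun p => dist (g p.1) (g p.2)) with hδ
        have hδpos : 0 < δ := by
          rw [hδ, Finset.lt_inf'_iff]
          intro p hp
          have : p.1 ≠ p.2 := by simpa [hs] using hp
          exact dist_pos.mpr (fun h => this (hginj h))
        refine ⟨δ / 2, by linarith, fun i j hij => ?_⟩
        have hmem : (i, j) ∈ s := by simp [hs, hij]
        have : δ ≤ dist (g i) (g j) :=
          Finset.inf'_le (fun p => dist (g p.1) (g p.2)) hmem
        linarith
    obtain ⟨ε, hε, hεsep⟩ := hsep
    -- neighborhood where g i ∈ f x'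
    refine ⟨ε, hε, ⋂ i : Fin m, {x' | g i ∈ f x'}, ?_, ?_, g, ?_, hεsep⟩
    · exact isOpen_iInter_of_finite fun i =>
        hgraph.preimage (Continuous.prodMk_left (g i))
    · exact mem_iInter.mpr fun i => hgmem i
    · intro x' hx' i
      exact mem_iInter.mp hx' i
  choose ε hεpos U hUopen hxU g hgmem hgsep using key
  -- compactness
  have hcover : (Set.univ : Set X) ⊆ ⋃ x : X, U x := fun x _ =>
    mem_iUnion.mpr ⟨x, hxU x⟩
  obtain ⟨t, ht⟩ := isCompact_univ.elim_finite_subcover U hUopen hcover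
  have hXne : Nonempty X := inferInstance
  obtain ⟨x₀⟩ := hXne
  have htne : t.Nonempty := by
    rcases ht (mem_univ x₀) with hx
    rw [mem_iUnion₂] at hx
    obtain ⟨i, hi, -⟩ := hx
    exact ⟨i, hi⟩
  refine ⟨t.inf' htne ε, ?_, ?_⟩
  · exact (Finset.lt_inf'_iff htne).mpr fun i _ => hεpos i
  · intro x
    have hx := ht (mem_univ x)
    rw [mem_iUnion₂] at hx
    obtain ⟨c, hc, hxc⟩ := hx
    refine ⟨g c, fun i => hgmem c x hxc i, fun i j hij => ?_⟩
    exact lt_of_le_of_lt (Finset.inf'_le _ hc) (hgsep c i j hij)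
end

section
/- Let X be a compact connected metric space without isolated points and f : X → 2^X an open set-valued map. Then the topological entropy of f is infinite: for every m ∈ ℕ there exists ε₀ > 0 such that for all 0 < ε < ε₀ and all n ∈ ℕ, the maximal cardinality s_n(ε) of an (n,ε)-separated set of orbit segments of f satisfies s_n(ε) ≥ mⁿ; hence lim_{ε → 0} limsup_{n → ∞} (1/n) log s_n(ε) = ∞. -/
open Metric Set

/-- A tuple `(u 0, …, u (n-1))` is an orbit segment of the set-valued map `f`. -/
def IsOrbitSeg {X : Type*} (f : X → Set X) (n : ℕ) (u : Fin n → X) : Prop :=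
  ∀ i : ℕ, ∀ h : i + 1 < n, u ⟨i + 1, h⟩ ∈ f (u ⟨i, Nat.lt_of_succ_lt h⟩)

/-- Key uniform lemma: there is a single `ε₀ > 0` such that every value `f x`
contains `M` points that are pairwise `ε₀`-separated. -/
lemma exists_uniform_sep {X : Type*} [MetricSpace X] [CompactSpace X] [Nonempty X]
    (hiso : ∀ x : X, (nhdsWithin x {x}ᶜ).NeBot)
    (f : X → Set X)
    (hgraph : IsOpen {p : X × X | p.2 ∈ f p.1})
    (hval : ∀ x, IsOpen (f x) ∧ IsConnected (f x)) (M : ℕ) :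
    ∃ ε₀ > 0, ∀ x : X, ∃ y : Fin M → X, (∀ j, y j ∈ f x) ∧
      ∀ j k : Fin M, j ≠ k → ε₀ ≤ dist (y j) (y k) := by
  classical
  have step : ∀ x : X, ∃ δ > 0, ∃ y : Fin M → X, (∀ j, y j ∈ f x) ∧
      ∀ j k : Fin M, j ≠ k → δ ≤ dist (y j) (y k) := by
    intro x
    obtain ⟨z, hz⟩ := (hval x).2.nonempty
    haveI := hiso z
    have hinf : (f x).Infinite := infinite_of_mem_nhds z ((hval x).1.mem_nhds hz)
    obtain ⟨t, hts, htc⟩ := hinf.exists_subset_card_eq M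
    let e := t.equivFinOfCardEq htc
    set y : Fin M → X := fun j => ((e.symm j : t) : X) with hy
    have hymem : ∀ j, y j ∈ f x := fun j => hts (e.symm j).2
    have hyinj : Function.Injective y := by
      intro j k h
      exact e.symm.injective (Subtype.ext h)
    set S : Finset ℝ :=
      (Finset.univ.offDiag : Finset (Fin M × Fin M)).image
        (fun p => dist (y p.1) (y p.2)) with hS
    have hne : (insert (1 : ℝ) S).Nonempty := ⟨1, Finset.mem_insert_self _ _⟩
    refine ⟨(insert (1 : ℝ) S).min' hne, ?_, y, hymem, ?_⟩
    · rw [gt_iff_lt, Finset.lt_min'_iff]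
      intro b hb
      rcases Finset.mem_insert.1 hb with hb | hb
      · simp [hb]
      · obtain ⟨p, hp, rfl⟩ := Finset.mem_image.1 hb
        have hpne : p.1 ≠ p.2 := (Finset.mem_offDiag.1 hp).2.2
        exact dist_pos.2 fun h => hpne (hyinj h)
    · intro j k hjk
      apply Finset.min'_le
      exact Finset.mem_insert_of_mem (Finset.mem_image.2
        ⟨(j, k), Finset.mem_offDiag.2 ⟨Finset.mem_univ _, Finset.mem_univ _, hjk⟩, rfl⟩)
  choose δ hδ y hy hsep using step
  set U : X → Set X := fun x => ⋂ j, {x' | y x j ∈ f x'} with hU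
  have hUopen : ∀ x, IsOpen (U x) := by
    intro x
    apply isOpen_iInter_of_finite
    intro j
    exact hgraph.preimage (continuous_id.prodMk continuous_const)
  have hxU : ∀ x, x ∈ U x := fun x => mem_iInter.2 fun j => hy x j
  obtain ⟨t, -, hcov⟩ := isCompact_univ.elim_nhds_subcover U
    (fun x _ => (hUopen x).mem_nhds (hxU x))
  have htne : t.Nonempty := by
    obtain ⟨x⟩ : Nonempty X := inferInstance
    obtain ⟨x₀, hx₀, -⟩ := mem_iUnion₂.1 (hcov (mem_univ x))
    exact ⟨x₀, hx₀⟩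
  refine ⟨t.inf' htne δ, ?_, ?_⟩
  · rw [gt_iff_lt, Finset.lt_inf'_iff]
    exact fun b hb => hδ b
  · intro x
    obtain ⟨x₀, hx₀, hxU₀⟩ := mem_iUnion₂.1 (hcov (mem_univ x))
    refine ⟨y x₀, fun j => mem_iInter.1 hxU₀ j, fun j k hjk => ?_⟩
    exact le_trans (Finset.inf'_le δ hx₀) (hsep x₀ j k hjk)

theorem stmt_19 {X : Type*} [MetricSpace X] [CompactSpace X] [ConnectedSpace X]
    (hiso : ∀ x : X, (nhdsWithin x {x}ᶜ).NeBot)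
    (f : X → Set X)
    (hgraph : IsOpen {p : X × X | p.2 ∈ f p.1})
    (hval : ∀ x, IsOpen (f x) ∧ IsConnected (f x)) :
    ∀ m : ℕ, ∃ ε₀ > 0, ∀ ε : ℝ, 0 < ε → ε < ε₀ → ∀ n : ℕ,
      ∃ E : Finset (Fin n → X),
        (∀ u ∈ E, IsOrbitSeg f n u) ∧
        (∀ u ∈ E, ∀ v ∈ E, u ≠ v → ∃ i : Fin n, ε ≤ dist (u i) (v i)) ∧
        m ^ n ≤ E.card := by
  classical
  intro m
  obtain ⟨ε₀, hε₀, hsel⟩ := exists_uniform_sep hiso f hgraph hval (m + 1)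
  choose c hc hcsep using hsel
  refine ⟨ε₀, hε₀, fun ε hε hεε₀ n => ?_⟩
  obtain ⟨x₀⟩ : Nonempty X := inferInstance
  -- infinite orbit generated by a word
  let a : (ℕ → Fin (m + 1)) → ℕ → X := fun w => Nat.rec x₀ (fun i xi => c xi (w i))
  let ext : (Fin n → Fin (m + 1)) → ℕ → Fin (m + 1) :=
    fun w i => if h : i < n then w ⟨i, h⟩ else 0
  let φ : (Fin n → Fin (m + 1)) → (Fin n → X) := fun w i => a (ext w) ((i : ℕ) + 1)
  have hkey : ∀ w w' : Fin n → Fin (m + 1), w ≠ w' →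
      ∃ i : Fin n, ε₀ ≤ dist (φ w i) (φ w' i) := by
    intro w w' hne
    have hex : ∃ i : ℕ, ∃ h : i < n, w ⟨i, h⟩ ≠ w' ⟨i, h⟩ := by
      by_contra hcon
      push_neg at hcon
      exact hne (funext fun i => by simpa using hcon i i.2)
    set i := Nat.find hex with hidef
    obtain ⟨hin, hwne⟩ := Nat.find_spec hex
    have hagree : ∀ j ≤ i, a (ext w) j = a (ext w') j := by
      intro j hj
      induction j with
      | zero => rfl
      | succ k ih =>
        have hk : k < i := Nat.lt_of_succ_le hj
        have hkn : k < n := lt_trans hk hin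
        have hwk : w ⟨k, hkn⟩ = w' ⟨k, hkn⟩ := by
          have := Nat.find_min hex hk
          push_neg at this
          exact this hkn
        have hext : ext w k = ext w' k := by
          simp only [ext, dif_pos hkn, hwk]
        show c (a (ext w) k) (ext w k) = c (a (ext w') k) (ext w' k)
        rw [ih (le_of_lt hk), hext]
    refine ⟨⟨i, hin⟩, ?_⟩
    have h1 : φ w ⟨i, hin⟩ = c (a (ext w) i) (w ⟨i, hin⟩) := by
      show c (a (ext w) i) (ext w i) = _
      simp only [ext, dif_pos (show i < n from hin)]
    have h2 : φ w' ⟨i, hin⟩ = c (a (ext w') i) (w' ⟨i, hin⟩) := by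
      show c (a (ext w') i) (ext w' i) = _
      simp only [ext, dif_pos (show i < n from hin)]
    rw [h1, h2, ← hagree i le_rfl]
    exact hcsep _ _ _ hwne
  have hφinj : Function.Injective φ := by
    intro w w' h
    by_contra hne
    obtain ⟨i, hi⟩ := hkey w w' hne
    rw [h] at hi
    simp at hi
    exact absurd (lt_of_lt_of_le hε₀ hi) (lt_irrefl 0)
  refine ⟨(Finset.univ : Finset (Fin n → Fin (m + 1))).image φ, ?_, ?_, ?_⟩
  · intro u hu
    obtain ⟨w, -, rfl⟩ := Finset.mem_image.1 hu
    intro i h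
    show a (ext w) (i + 1 + 1) ∈ f (a (ext w) (i + 1))
    exact hc (a (ext w) (i + 1)) (ext w (i + 1))
  · intro u hu v hv huv
    obtain ⟨w, -, rfl⟩ := Finset.mem_image.1 hu
    obtain ⟨w', -, rfl⟩ := Finset.mem_image.1 hv
    have hwne : w ≠ w' := fun h => huv (by rw [h])
    obtain ⟨i, hi⟩ := hkey w w' hwne
    exact ⟨i, le_trans (le_of_lt hεε₀) hi⟩
  · rw [Finset.card_image_of_injective _ hφinj, Finset.card_univ]
    calc m ^ n ≤ (m + 1) ^ n := Nat.pow_le_pow_left (Nat.le_succ m) n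
      _ = Fintype.card (Fin n → Fin (m + 1)) := by simp
end
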